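/- For n = 2, let γ_{1,2}, γ_{2,1} : ℝ≥0 → ℝ≥0 be continuous non-decreasing functions with value 0 at 0, and γ_{1,1} = γ_{2,2} ≡ 0. If γ_{1,2}(γ_{2,1}(s)) < s for all s > 0, then the MAX-preserving map Γ(x_1,x_2) = (γ_{1,2}(x_2), γ_{2,1}(x_1)) satisfies: every solution of the discrete-time system x(k+1) = Γ(x(k)) with x(0) ∈ ℝ≥0^2 converges to (0,0) as k → ∞. -/

import Mathlib

open scoped NNReal

open Filter

/-- Iterates of a continuous monotone map `f` with `f s < s` for `s > 0` tend to `0`. -/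
lemma iter_tendsto_zero (f : ℝ≥0 → ℝ≥0) (hc : Continuous f) (hm : Monotone f)
    (hf : ∀ s : ℝ≥0, 0 < s → f s < s) (t : ℝ≥0) :
    Tendsto (fun m : ℕ => f^[m] t) atTop (nhds 0) := by
  have hle : ∀ s : ℝ≥0, f s ≤ s := by
    intro s
    rcases eq_or_lt_of_le (zero_le : 0 ≤ s) with h | h
    · have h0 : f 0 = 0 := by
        by_contra h0
        have hpos : 0 < f 0 := pos_iff_ne_zero.mpr h0
        have := hf (f 0) hpos
        exact absurd (hm (zero_le : 0 ≤ f 0)) (not_le_of_gt this)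
      rw [← h, h0]
    · exact (hf s h).le
  set a : ℕ → ℝ≥0 := fun m => f^[m] t with ha
  have hanti : Antitone a := antitone_nat_of_succ_le (fun n => by
    simp only [ha, Function.iterate_succ_apply']
    exact hle _)
  have hbdd : BddBelow (Set.range a) := OrderBot.bddBelow _
  have hlim : Tendsto a atTop (nhds (⨅ m, a m)) := tendsto_atTop_ciInf hanti hbdd
  set L := ⨅ m, a m with hL
  have hfL : f L = L := by
    have h1 : Tendsto (fun m => a (m + 1)) atTop (nhds L) :=
      hlim.comp (tendsto_add_atTop_nat 1)
    have h2 : Tendsto (fun m => f (a m)) atTop (nhds (f L)) :=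
      (hc.tendsto L).comp hlim
    have he : (fun m => a (m + 1)) = fun m => f (a m) := by
      funext m; simp [ha, Function.iterate_succ_apply']
    rw [he] at h1
    exact tendsto_nhds_unique h2 h1
  have hL0 : L = 0 := by
    by_contra h
    exact absurd hfL (ne_of_lt (hf L (pos_iff_ne_zero.mpr h)))
  rwa [hL0] at hlim

theorem discrete_smallGain_two_dim
    (γ12 γ21 : ℝ≥0 → ℝ≥0)
    (hc12 : Continuous γ12) (hc21 : Continuous γ21)
    (hm12 : Monotone γ12) (hm21 : Monotone γ21)
    (h012 : γ12 0 = 0) (h021 : γ21 0 = 0)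
    (hsg : ∀ s : ℝ≥0, 0 < s → γ12 (γ21 s) < s) :
    ∀ x0 : ℝ≥0 × ℝ≥0,
      Filter.Tendsto (fun k : ℕ => (fun p : ℝ≥0 × ℝ≥0 => (γ12 p.2, γ21 p.1))^[k] x0)
        Filter.atTop (nhds (0, 0)) := by
  intro x0
  set Γ : ℝ≥0 × ℝ≥0 → ℝ≥0 × ℝ≥0 := fun p => (γ12 p.2, γ21 p.1) with hΓ
  -- the dual small-gain condition
  have hsg' : ∀ s : ℝ≥0, 0 < s → γ21 (γ12 s) < s := by
    intro s hs
    by_contra h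
    push_neg at h
    rcases eq_or_lt_of_le (zero_le : 0 ≤ γ12 s) with h0 | h0
    · have : γ21 (γ12 s) = 0 := by rw [← h0, h021]
      rw [this] at h
      exact absurd h (not_le_of_gt hs)
    · have h1 : γ12 (γ21 (γ12 s)) < γ12 s := hsg (γ12 s) h0
      have h2 : γ12 s ≤ γ12 (γ21 (γ12 s)) := hm12 h
      exact absurd h2 (not_le_of_gt h1)
  -- the even iterates decouple
  have key : ∀ m : ℕ, Γ^[2 * m] x0 =
      ((γ12 ∘ γ21)^[m] x0.1, (γ21 ∘ γ12)^[m] x0.2) := by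
    intro m
    induction m with
    | zero => simp
    | succ m ih =>
        have : 2 * (m + 1) = (2 * m) + 1 + 1 := by ring
        rw [this, Function.iterate_succ_apply', Function.iterate_succ_apply', ih]
        simp [hΓ, Function.iterate_succ_apply', Function.comp]
  have hEven : Tendsto (fun m : ℕ => Γ^[2 * m] x0) atTop (nhds ((0 : ℝ≥0), (0 : ℝ≥0))) := by
    have h1 : Tendsto (fun m : ℕ => (γ12 ∘ γ21)^[m] x0.1) atTop (nhds 0) :=
      iter_tendsto_zero _ (hc12.comp hc21) (hm12.comp hm21) hsg x0.1
    have h2 : Tendsto (fun m : ℕ => (γ21 ∘ γ12)^[m] x0.2) atTop (nhds 0) :=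
      iter_tendsto_zero _ (hc21.comp hc12) (hm21.comp hm12) hsg' x0.2
    have := h1.prodMk_nhds h2
    simpa only [key] using this
  have hΓcont : Continuous Γ := (hc12.comp continuous_snd).prodMk (hc21.comp continuous_fst)
  have hΓ0 : Γ (0, 0) = (0, 0) := by simp [hΓ, h012, h021]
  have hOdd : Tendsto (fun m : ℕ => Γ^[2 * m + 1] x0) atTop (nhds ((0 : ℝ≥0), (0 : ℝ≥0))) := by
    have := (hΓcont.tendsto (0, 0)).comp hEven
    rw [hΓ0] at this
    have he : (fun m : ℕ => Γ^[2 * m + 1] x0) = fun m => Γ (Γ^[2 * m] x0) := by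
      funext m; rw [Function.iterate_succ_apply']
    rw [he]
    exact this
  -- combine
  rw [Filter.tendsto_def]
  intro U hU
  have hE := (hEven.eventually (eventually_mem_set.mpr hU)).exists_forall_of_atTop
  have hO := (hOdd.eventually (eventually_mem_set.mpr hU)).exists_forall_of_atTop
  obtain ⟨N1, hN1⟩ := hE
  obtain ⟨N2, hN2⟩ := hO
  rw [Filter.mem_atTop_sets]
  refine ⟨2 * max N1 N2 + 1, fun k hk => ?_⟩
  rcases Nat.even_or_odd k with ⟨m, hm⟩ | ⟨m, hm⟩
  · have hk' : k = 2 * m := by omega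
    have : N1 ≤ m := by omega
    have := hN1 m this
    rwa [hk']
  · have : N2 ≤ m := by omega
    have := hN2 m this
    rwa [hm]
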